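/- For a positive integer n, there exists a finite set S of rational numbers contained in the open interval (−1, 1), with |S| = n, closed under negation (x ∈ S implies −x ∈ S), and satisfying Σ_{x∈S} x² = n/2, if and only if n ∉ {1, 2, 3, 7}. -/
import Mathlib

/-! ### Auxiliary lemmas -/

section Aux

/-- No rational square equals a prime. -/
lemma rat_sq_ne_prime (p : ℕ) (hp : p.Prime) (q : ℚ) : q ^ 2 ≠ (p : ℚ) := by
  intro h
  have hq : ((q : ℝ)) ^ 2 = (p : ℝ) := by exact_mod_cast h
  have hs : Real.sqrt p = ((|q| : ℚ) : ℝ) := by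
    rw [← hq, Real.sqrt_sq_eq_abs]; push_cast; ring
  exact (|q|).not_irrational (hs ▸ hp.irrational_sqrt)

lemma zmod8_odd_var (x y z w k : ZMod 8) (hx : x = 2*k+1) :
    x^2 + y^2 + z^2 ≠ 7 * w^2 := by revert x y z w k; decide

lemma zmod8_odd_w (x y z w k : ZMod 8) (hw : w = 2*k+1) :
    x^2 + y^2 + z^2 ≠ 7 * w^2 := by revert x y z w k; decide

/-- Descent: `X² + Y² + Z² = 7 n²` forces `n = 0`. -/
lemma seven_descent : ∀ n : ℕ, ∀ X Y Z : ℤ, X^2 + Y^2 + Z^2 = 7 * (n:ℤ)^2 → n = 0 := by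
  intro n
  induction n using Nat.strong_induction_on with
  | _ n ih =>
    intro X Y Z h
    rcases Nat.eq_zero_or_pos n with h0 | hpos
    · exact h0
    have h8 : (X : ZMod 8)^2 + (Y : ZMod 8)^2 + (Z : ZMod 8)^2 = 7 * (n : ZMod 8)^2 := by
      have := congrArg (fun t : ℤ => (t : ZMod 8)) h
      push_cast at this; exact this
    have hX : Even X := by
      rcases Int.even_or_odd X with he | ⟨k, hk⟩
      · exact he
      exact absurd h8 (zmod8_odd_var _ _ _ _ (k : ZMod 8) (by rw [show X = 2*k+1 from hk]; push_cast; ring))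
    have hY : Even Y := by
      rcases Int.even_or_odd Y with he | ⟨k, hk⟩
      · exact he
      exact absurd (by linear_combination h8 :
          (Y : ZMod 8)^2 + (X : ZMod 8)^2 + (Z : ZMod 8)^2 = 7 * (n : ZMod 8)^2)
        (zmod8_odd_var _ _ _ _ (k : ZMod 8) (by rw [show Y = 2*k+1 from hk]; push_cast; ring))
    have hZ : Even Z := by
      rcases Int.even_or_odd Z with he | ⟨k, hk⟩
      · exact he
      exact absurd (by linear_combination h8 :
          (Z : ZMod 8)^2 + (X : ZMod 8)^2 + (Y : ZMod 8)^2 = 7 * (n : ZMod 8)^2)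
        (zmod8_odd_var _ _ _ _ (k : ZMod 8) (by rw [show Z = 2*k+1 from hk]; push_cast; ring))
    have hn : Even n := by
      rcases Nat.even_or_odd n with he | ⟨k, hk⟩
      · exact he
      exact absurd h8 (zmod8_odd_w _ _ _ _ (k : ZMod 8) (by rw [show n = 2*k+1 from hk]; push_cast; ring))
    obtain ⟨x', hx'⟩ := hX
    obtain ⟨y', hy'⟩ := hY
    obtain ⟨z', hz'⟩ := hZ
    obtain ⟨m, hm⟩ := hn
    have hmn : m < n := by omega
    have h4 : (4:ℤ) * (x'^2 + y'^2 + z'^2) = 4 * (7 * (m:ℤ)^2) := by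
      have hcast : (n : ℤ) = 2 * m := by rw [hm]; push_cast; ring
      rw [hx', hy', hz', hcast] at h
      linear_combination h
    have := ih m hmn x' y' z' (mul_left_cancel₀ (by norm_num : (4:ℤ) ≠ 0) h4)
    omega

/-- 7/4 is not a sum of three rational squares. -/
lemma no_three_sq (a b c : ℚ) : a^2 + b^2 + c^2 ≠ 7/4 := by
  intro h
  have hda : ((a.den : ℚ)) ≠ 0 := by exact_mod_cast a.den_nz
  have hdb : ((b.den : ℚ)) ≠ 0 := by exact_mod_cast b.den_nz
  have hdc : ((c.den : ℚ)) ≠ 0 := by exact_mod_cast c.den_nz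
  have ha : (a.num : ℚ) = a * (a.den : ℚ) := (div_eq_iff hda).mp (Rat.num_div_den a)
  have hb : (b.num : ℚ) = b * (b.den : ℚ) := (div_eq_iff hdb).mp (Rat.num_div_den b)
  have hc : (c.num : ℚ) = c * (c.den : ℚ) := (div_eq_iff hdc).mp (Rat.num_div_den c)
  set X : ℤ := 2 * a.num * b.den * c.den with hXdef
  set Y : ℤ := 2 * b.num * a.den * c.den with hYdef
  set Z : ℤ := 2 * c.num * a.den * b.den with hZdef
  set N : ℕ := a.den * b.den * c.den with hNdef
  have key : (X : ℚ)^2 + (Y : ℚ)^2 + (Z : ℚ)^2 = 7 * (N : ℚ)^2 := by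
    rw [hXdef, hYdef, hZdef, hNdef]
    push_cast
    rw [ha, hb, hc]
    linear_combination (4 * ((a.den : ℚ) * b.den * c.den)^2) * h
  have key' : X^2 + Y^2 + Z^2 = 7 * (N : ℤ)^2 := by exact_mod_cast key
  have := seven_descent N X Y Z key'
  rw [hNdef] at this
  simp [Nat.mul_eq_zero, a.den_nz, b.den_nz, c.den_nz] at this

/-- Splitting an antipodal set into positive part, negative part and zero part. -/
lemma antipodal_split (S : Finset ℚ) (hneg : ∀ x ∈ S, -x ∈ S) :
    S.card = 2 * (S.filter (fun x => 0 < x)).card + (S.filter (fun x => x = 0)).card ∧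
    ∑ x ∈ S, x^2 = 2 * ∑ x ∈ S.filter (fun x => 0 < x), x^2 := by
  classical
  have hNimg : S.filter (fun x => x < 0) = (S.filter (fun x => 0 < x)).image (fun x => -x) := by
    ext x
    simp only [Finset.mem_filter, Finset.mem_image]
    constructor
    · rintro ⟨hxS, hx0⟩
      exact ⟨-x, ⟨hneg x hxS, by linarith⟩, by ring⟩
    · rintro ⟨y, ⟨hyS, hy0⟩, rfl⟩
      exact ⟨hneg y hyS, by linarith⟩
  have hfilter1 : (S.filter (fun x => ¬ 0 < x)).filter (fun x => x = 0)
      = S.filter (fun x => x = 0) := by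
    ext x
    simp only [Finset.mem_filter]
    constructor
    · rintro ⟨⟨h1, _⟩, h3⟩; exact ⟨h1, h3⟩
    · rintro ⟨h1, rfl⟩; exact ⟨⟨h1, by norm_num⟩, rfl⟩
  have hfilter2 : (S.filter (fun x => ¬ 0 < x)).filter (fun x => ¬ x = 0)
      = S.filter (fun x => x < 0) := by
    ext x
    simp only [Finset.mem_filter]
    constructor
    · rintro ⟨⟨h1, h2⟩, h3⟩
      exact ⟨h1, (not_lt.mp h2).lt_of_ne h3⟩
    · rintro ⟨h1, h2⟩
      exact ⟨⟨h1, not_lt.mpr h2.le⟩, ne_of_lt h2⟩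
  have hcardN : (S.filter (fun x => x < 0)).card = (S.filter (fun x => 0 < x)).card := by
    rw [hNimg]
    exact Finset.card_image_of_injective _ neg_injective
  constructor
  · have h1 := Finset.card_filter_add_card_filter_not (s := S) (p := fun x => 0 < x)
    have h2 := Finset.card_filter_add_card_filter_not
      (s := S.filter (fun x => ¬ 0 < x)) (p := fun x => x = 0)
    rw [hfilter1, hfilter2] at h2
    omega
  · have h1 := Finset.sum_filter_add_sum_filter_not S (fun x => 0 < x) (fun x => x^2)
    have h2 := Finset.sum_filter_add_sum_filter_not (S.filter (fun x => ¬ 0 < x))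
      (fun x => x = 0) (fun x => x^2)
    rw [hfilter1, hfilter2] at h2
    have hz : ∑ x ∈ S.filter (fun x => x = 0), x^2 = 0 := by
      apply Finset.sum_eq_zero
      intro x hx
      rw [(Finset.mem_filter.mp hx).2]; ring
    have hn : ∑ x ∈ S.filter (fun x => x < 0), x^2 = ∑ x ∈ S.filter (fun x => 0 < x), x^2 := by
      rw [hNimg, Finset.sum_image (fun x _ y _ h => neg_injective h)]
      apply Finset.sum_congr rfl
      intro x _; ring
    rw [← h1, ← h2, hz, hn]
    ring

end Aux

/-! ### Construction -/

section Con

/-- First coordinate of the Pythagorean pair. -/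
noncomputable def cf (k : ℕ) : ℚ := ((k:ℚ)^2 - 1) / ((k:ℚ)^2 + 1)
/-- Second coordinate of the Pythagorean pair. -/
noncomputable def cg (k : ℕ) : ℚ := 2 * (k:ℚ) / ((k:ℚ)^2 + 1)

lemma cden_pos (k : ℕ) : (0:ℚ) < (k:ℚ)^2 + 1 := by positivity

lemma cfg_sq (k : ℕ) : cf k ^ 2 + cg k ^ 2 = 1 := by
  have h := (cden_pos k).ne'
  unfold cf cg
  field_simp
  ring

lemma cf_mono : StrictMono cf := by
  intro a b hab
  unfold cf
  rw [div_lt_div_iff₀ (cden_pos a) (cden_pos b)]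
  have h : (a:ℚ) < (b:ℚ) := by exact_mod_cast hab
  have ha : (0:ℚ) ≤ (a:ℚ) := by positivity
  nlinarith [h, ha]

lemma cg_anti : StrictAntiOn cg (Set.Ici 1) := by
  intro a ha b hb hab
  unfold cg
  rw [div_lt_div_iff₀ (cden_pos b) (cden_pos a)]
  have h : (a:ℚ) < (b:ℚ) := by exact_mod_cast hab
  have ha1 : (1:ℚ) ≤ (a:ℚ) := by exact_mod_cast (ha : 1 ≤ a)
  have key : (0:ℚ) < ((b:ℚ) - a) * ((a:ℚ) * b - 1) :=
    mul_pos (by linarith) (by nlinarith)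
  nlinarith [key]

lemma cg_pos (k : ℕ) (hk : 3 ≤ k) : 0 < cg k := by
  have h3 : (3:ℚ) ≤ (k:ℚ) := by exact_mod_cast hk
  unfold cg
  positivity

lemma cg_lt_cf (k : ℕ) (hk : 3 ≤ k) : cg k < cf k := by
  have h3 : (3:ℚ) ≤ (k:ℚ) := by exact_mod_cast hk
  unfold cf cg
  rw [div_lt_div_iff₀ (cden_pos k) (cden_pos k)]
  have h1 : 2*(k:ℚ) < (k:ℚ)^2 - 1 := by nlinarith [sq_nonneg ((k:ℚ) - 1)]
  nlinarith [mul_lt_mul_of_pos_right h1 (cden_pos k)]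

lemma cf_lt_one (k : ℕ) : cf k < 1 := by
  unfold cf
  rw [div_lt_one (cden_pos k)]
  linarith

/-- The design property. -/
def Ok (n : ℕ) : Prop :=
  ∃ S : Finset ℚ, (∀ x ∈ S, -1 < x ∧ x < 1) ∧ S.card = n ∧ (∀ x ∈ S, -x ∈ S) ∧
      ∑ x ∈ S, x ^ 2 = (n : ℚ) / 2

lemma ok_step (n : ℕ) (h : Ok n) : Ok (n + 4) := by
  classical
  obtain ⟨S, hb, hcard, hneg, hsum⟩ := h
  set bad : Set ℕ := (cf ⁻¹' (S : Set ℚ)) ∪ (Set.Ici 1 ∩ cg ⁻¹' (S : Set ℚ)) with hbad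
  have hbadfin : bad.Finite := by
    apply Set.Finite.union
    · exact Set.Finite.preimage cf_mono.injective.injOn S.finite_toSet
    · apply Set.Finite.of_finite_image (f := cg)
      · apply S.finite_toSet.subset
        rintro y ⟨x, ⟨_, hx⟩, rfl⟩
        exact hx
      · exact cg_anti.injOn.mono (fun x hx => hx.1)
  obtain ⟨k, hk⟩ := ((Set.Ici_infinite 3).diff hbadfin).nonempty
  have hk3 : 3 ≤ k := Set.mem_Ici.mp hk.1
  have hfS : cf k ∉ S := fun hmem => hk.2 (Or.inl hmem)
  have hgS : cg k ∉ S := fun hmem => hk.2 (Or.inr ⟨Set.mem_Ici.mpr (by omega), hmem⟩)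
  have hfnS : -cf k ∉ S := fun hmem => hfS (by simpa using hneg _ hmem)
  have hgnS : -cg k ∉ S := fun hmem => hgS (by simpa using hneg _ hmem)
  have hg0 : 0 < cg k := cg_pos k hk3
  have hgf : cg k < cf k := cg_lt_cf k hk3
  have hf1 : cf k < 1 := cf_lt_one k
  refine ⟨insert (cf k) (insert (-cf k) (insert (cg k) (insert (-cg k) S))), ?_, ?_, ?_, ?_⟩
  · intro x hx
    simp only [Finset.mem_insert] at hx
    rcases hx with rfl | rfl | rfl | rfl | hx
    · constructor <;> linarith
    · constructor <;> linarith
    · constructor <;> linarith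
    · constructor <;> linarith
    · exact hb x hx
  · have m4 : -cg k ∉ S := hgnS
    have m3 : cg k ∉ insert (-cg k) S := by
      simp only [Finset.mem_insert]
      push_neg
      exact ⟨by intro hh; linarith, hgS⟩
    have m2 : -cf k ∉ insert (cg k) (insert (-cg k) S) := by
      simp only [Finset.mem_insert]
      push_neg
      exact ⟨by intro hh; linarith, by intro hh; linarith [neg_lt_neg hgf], hfnS⟩
    have m1 : cf k ∉ insert (-cf k) (insert (cg k) (insert (-cg k) S)) := by
      simp only [Finset.mem_insert]
      push_neg
      exact ⟨by intro hh; linarith, by intro hh; linarith,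
        by intro hh; linarith, hfS⟩
    rw [Finset.card_insert_of_notMem m1, Finset.card_insert_of_notMem m2,
      Finset.card_insert_of_notMem m3, Finset.card_insert_of_notMem m4, hcard]
  · intro x hx
    simp only [Finset.mem_insert] at hx ⊢
    rcases hx with rfl | rfl | rfl | rfl | hx
    · exact Or.inr (Or.inl rfl)
    · exact Or.inl (neg_neg _)
    · exact Or.inr (Or.inr (Or.inr (Or.inl rfl)))
    · exact Or.inr (Or.inr (Or.inl (neg_neg _)))
    · exact Or.inr (Or.inr (Or.inr (Or.inr (hneg x hx))))
  · have m4 : -cg k ∉ S := hgnS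
    have m3 : cg k ∉ insert (-cg k) S := by
      simp only [Finset.mem_insert]
      push_neg
      exact ⟨by intro hh; linarith, hgS⟩
    have m2 : -cf k ∉ insert (cg k) (insert (-cg k) S) := by
      simp only [Finset.mem_insert]
      push_neg
      exact ⟨by intro hh; linarith, by intro hh; linarith [neg_lt_neg hgf], hfnS⟩
    have m1 : cf k ∉ insert (-cf k) (insert (cg k) (insert (-cg k) S)) := by
      simp only [Finset.mem_insert]
      push_neg
      exact ⟨by intro hh; linarith, by intro hh; linarith,
        by intro hh; linarith, hfS⟩
    rw [Finset.sum_insert m1, Finset.sum_insert m2, Finset.sum_insert m3,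
      Finset.sum_insert m4, hsum]
    push_cast
    linear_combination 2 * cfg_sq k

lemma ok4 : Ok 4 := by
  refine ⟨⟨(↑[(3:ℚ)/5, 4/5, -(3/5), -(4/5)] : Multiset ℚ), ?_⟩, ?_, ?_, ?_, ?_⟩
  · rw [Multiset.coe_nodup]
    norm_num [List.nodup_cons, List.mem_cons]
  · intro x hx
    simp only [Finset.mem_mk, Multiset.mem_coe, List.mem_cons, List.not_mem_nil, or_false] at hx
    rcases hx with rfl | rfl | rfl | rfl <;> norm_num
  · simp [Finset.card_mk]
  · intro x hx
    simp only [Finset.mem_mk, Multiset.mem_coe, List.mem_cons, List.not_mem_nil, or_false] at hx ⊢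
    rcases hx with rfl | rfl | rfl | rfl <;> norm_num
  · show Multiset.sum (Multiset.map _ _) = _
    norm_num [Multiset.map_coe, Multiset.sum_coe]
lemma ok5 : Ok 5 := by
  refine ⟨⟨(↑[(0:ℚ), 19/26, 11/13, -(19/26), -(11/13)] : Multiset ℚ), ?_⟩, ?_, ?_, ?_, ?_⟩
  · rw [Multiset.coe_nodup]
    norm_num [List.nodup_cons, List.mem_cons]
  · intro x hx
    simp only [Finset.mem_mk, Multiset.mem_coe, List.mem_cons, List.not_mem_nil, or_false] at hx
    rcases hx with rfl | rfl | rfl | rfl | rfl <;> norm_num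
  · simp [Finset.card_mk]
  · intro x hx
    simp only [Finset.mem_mk, Multiset.mem_coe, List.mem_cons, List.not_mem_nil, or_false] at hx ⊢
    rcases hx with rfl | rfl | rfl | rfl | rfl <;> norm_num
  · show Multiset.sum (Multiset.map _ _) = _
    norm_num [Multiset.map_coe, Multiset.sum_coe]
lemma ok6 : Ok 6 := by
  refine ⟨⟨(↑[(1:ℚ)/2, 19/26, 11/13, -(1/2), -(19/26), -(11/13)] : Multiset ℚ), ?_⟩, ?_, ?_, ?_, ?_⟩
  · rw [Multiset.coe_nodup]
    norm_num [List.nodup_cons, List.mem_cons]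
  · intro x hx
    simp only [Finset.mem_mk, Multiset.mem_coe, List.mem_cons, List.not_mem_nil, or_false] at hx
    rcases hx with rfl | rfl | rfl | rfl | rfl | rfl <;> norm_num
  · simp [Finset.card_mk]
  · intro x hx
    simp only [Finset.mem_mk, Multiset.mem_coe, List.mem_cons, List.not_mem_nil, or_false] at hx ⊢
    rcases hx with rfl | rfl | rfl | rfl | rfl | rfl <;> norm_num
  · show Multiset.sum (Multiset.map _ _) = _
    norm_num [Multiset.map_coe, Multiset.sum_coe]
lemma ok11 : Ok 11 := by
  refine ⟨⟨(↑[(0:ℚ), 1/2, 19/26, 11/13, 11/17, 31/34, -(1/2), -(19/26), -(11/13), -(11/17), -(31/34)] : Multiset ℚ), ?_⟩, ?_, ?_, ?_, ?_⟩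
  · rw [Multiset.coe_nodup]
    norm_num [List.nodup_cons, List.mem_cons]
  · intro x hx
    simp only [Finset.mem_mk, Multiset.mem_coe, List.mem_cons, List.not_mem_nil, or_false] at hx
    rcases hx with rfl | rfl | rfl | rfl | rfl | rfl | rfl | rfl | rfl | rfl | rfl <;> norm_num
  · simp [Finset.card_mk]
  · intro x hx
    simp only [Finset.mem_mk, Multiset.mem_coe, List.mem_cons, List.not_mem_nil, or_false] at hx ⊢
    rcases hx with rfl | rfl | rfl | rfl | rfl | rfl | rfl | rfl | rfl | rfl | rfl <;> norm_num
  · show Multiset.sum (Multiset.map _ _) = _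
    norm_num [Multiset.map_coe, Multiset.sum_coe]
lemma ok_all : ∀ n : ℕ, 4 ≤ n → n ≠ 7 → Ok n := by
  intro n
  induction n using Nat.strong_induction_on with
  | _ n ih =>
    intro h4 h7
    rcases (by omega : n = 4 ∨ n = 5 ∨ n = 6 ∨ n = 11 ∨ (8 ≤ n ∧ n ≠ 11)) with
      rfl | rfl | rfl | rfl | ⟨h8, h11⟩
    · exact ok4
    · exact ok5
    · exact ok6
    · exact ok11
    · have h := ok_step (n - 4) (ih (n - 4) (by omega) (by omega) (by omega))
      rwa [show n - 4 + 4 = n by omega] at h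

end Con

/-- Corollary 3.7 (Chebyshev case): there exists an antipodal (negation-closed) set of `n`
rational points in `(-1, 1)` with sum of squares `n/2` iff `n ∉ {1,2,3,7}`. -/
theorem stmt_1 (n : ℕ) (hn : 0 < n) :
    (∃ S : Finset ℚ, (∀ x ∈ S, -1 < x ∧ x < 1) ∧ S.card = n ∧ (∀ x ∈ S, -x ∈ S) ∧
      ∑ x ∈ S, x ^ 2 = (n : ℚ) / 2) ↔ n ∉ ({1, 2, 3, 7} : Set ℕ) := by
  classical
  constructor
  · rintro ⟨S, hb, hcard, hneg, hsum⟩ hmem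
    simp only [Set.mem_insert_iff, Set.mem_singleton_iff] at hmem
    obtain ⟨hc, hs⟩ := antipodal_split S hneg
    have hzsub : S.filter (fun x => x = 0) ⊆ {0} := by
      intro x hx
      simp only [Finset.mem_singleton]
      exact (Finset.mem_filter.mp hx).2
    have hz1 : (S.filter (fun x => x = 0)).card ≤ 1 := by
      calc (S.filter (fun x => x = 0)).card ≤ ({0} : Finset ℚ).card :=
            Finset.card_le_card hzsub
        _ = 1 := Finset.card_singleton 0
    rw [hcard] at hc
    rcases hmem with rfl | rfl | rfl | rfl
    · have hp : (S.filter (fun x => 0 < x)).card = 0 := by omega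
      rw [Finset.card_eq_zero.mp hp] at hs
      rw [hs] at hsum
      norm_num at hsum
    · have hp : (S.filter (fun x => 0 < x)).card = 1 := by omega
      obtain ⟨a, hP⟩ := Finset.card_eq_one.mp hp
      rw [hP, Finset.sum_singleton] at hs
      rw [hs] at hsum
      exact rat_sq_ne_prime 2 Nat.prime_two (2 * a)
        (by push_cast at hsum ⊢; linear_combination 2 * hsum)
    · have hp : (S.filter (fun x => 0 < x)).card = 1 := by omega
      obtain ⟨a, hP⟩ := Finset.card_eq_one.mp hp
      rw [hP, Finset.sum_singleton] at hs
      rw [hs] at hsum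
      exact rat_sq_ne_prime 3 Nat.prime_three (2 * a)
        (by push_cast at hsum ⊢; linear_combination 2 * hsum)
    · have hp : (S.filter (fun x => 0 < x)).card = 3 := by omega
      obtain ⟨a, b, c, hab, hac, hbc, hP⟩ := Finset.card_eq_three.mp hp
      rw [hP] at hs
      rw [Finset.sum_insert (by simp [hab, hac]), Finset.sum_insert (by simp [hbc]),
        Finset.sum_singleton] at hs
      rw [hs] at hsum
      exact no_three_sq a b c (by push_cast at hsum ⊢; linarith)
  · intro hmem
    simp only [Set.mem_insert_iff, Set.mem_singleton_iff] at hmem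
    push_neg at hmem
    exact ok_all n (by omega) (by omega)
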